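/- Let x = (x_i) ∈ ℓ¹ with ‖x‖₁ = 1 and all coordinates x_i nonzero. Let x* = (sign x_i) ∈ ℓ∞ = (ℓ¹)*. Then x*(x) = 1, and the rank-one projection P = x* ⊗ x on ℓ¹ satisfies ‖Id − P‖ = 2. -/

import Mathlib

set_option maxHeartbeats 1000000


/-- For a smooth point `x` of the unit sphere of `ℓ¹` (all coordinates nonzero),
the functional `x* = (sign x_i) ∈ ℓ∞ = (ℓ¹)*` satisfies `x*(x) = 1` and the
rank-one projection `P = x* ⊗ x` satisfies `‖Id - P‖ = 2`. -/
theorem stmt_2 (x : lp (fun _ : ℕ => ℝ) 1) (hx : ‖x‖ = 1)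
    (hxi : ∀ i : ℕ, x i ≠ 0)
    (f : lp (fun _ : ℕ => ℝ) 1 →L[ℝ] ℝ)
    (hf : ∀ y : lp (fun _ : ℕ => ℝ) 1, f y = ∑' i : ℕ, Real.sign (x i) * y i) :
    f x = 1 ∧
    ‖ContinuousLinearMap.id ℝ (lp (fun _ : ℕ => ℝ) 1) - f.smulRight x‖ = 2 := by
  -- norm formula on ℓ¹
  have hnorm : ∀ z : lp (fun _ : ℕ => ℝ) 1, ‖z‖ = ∑' i, |z i| := by
    intro z
    have := lp.norm_eq_tsum_rpow (E := fun _ : ℕ => ℝ) (p := 1) (by norm_num) z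
    simpa [Real.rpow_one] using this
  have hsumm : ∀ z : lp (fun _ : ℕ => ℝ) 1, Summable fun i => |z i| := by
    intro z
    have := (lp.memℓp z).summable (p := 1) (by norm_num)
    simpa [Real.rpow_one] using this
  have hxsum : (∑' i, |x i|) = 1 := by rw [← hnorm x, hx]
  have hxabs : ∀ i, |x i| ≤ 1 := by
    intro i
    rw [← hxsum]
    exact Summable.le_tsum (hsumm x) i fun j _ => abs_nonneg _
  have hsign : ∀ i, Real.sign (x i) * x i = |x i| := by
    intro i
    rcases (hxi i).lt_or_gt with h | h
    · rw [Real.sign_of_neg h, abs_of_neg h]; ring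
    · rw [Real.sign_of_pos h, abs_of_pos h]; ring
  -- first part
  have hfx : f x = 1 := by rw [hf]; simp_rw [hsign]; exact hxsum
  refine ⟨hfx, ?_⟩
  set T := ContinuousLinearMap.id ℝ (lp (fun _ : ℕ => ℝ) 1) - f.smulRight x with hT
  have hTapp : ∀ y, T y = y - f y • x := fun y => rfl
  -- bound on f
  have hfle : ∀ y : lp (fun _ : ℕ => ℝ) 1, |f y| ≤ ‖y‖ := by
    intro y
    rw [hf, hnorm]
    have hb : ∀ i, |Real.sign (x i) * y i| ≤ |y i| := by
      intro i
      rw [abs_mul]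
      calc |Real.sign (x i)| * |y i| ≤ 1 * |y i| := by
            gcongr
            rcases (hxi i).lt_or_gt with h | h
            · rw [Real.sign_of_neg h]; norm_num
            · rw [Real.sign_of_pos h]; norm_num
        _ = |y i| := one_mul _
    have hs : Summable fun i => Real.sign (x i) * y i :=
      Summable.of_norm_bounded (hsumm y)
        (fun i => by rw [Real.norm_eq_abs]; exact hb i)
    have hsa : Summable fun i => |Real.sign (x i) * y i| := hs.abs
    have hsa' : Summable fun i => ‖Real.sign (x i) * y i‖ := by
      simpa only [Real.norm_eq_abs] using hsa
    calc |∑' i, Real.sign (x i) * y i| ≤ ∑' i, |Real.sign (x i) * y i| := by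
          simpa only [Real.norm_eq_abs] using norm_tsum_le_tsum_norm hsa'
      _ ≤ ∑' i, |y i| := Summable.tsum_le_tsum hb hsa (hsumm y)
  -- upper bound
  have hub : ‖T‖ ≤ 2 := by
    refine ContinuousLinearMap.opNorm_le_bound _ (by norm_num) fun y => ?_
    rw [hTapp]
    calc ‖y - f y • x‖ ≤ ‖y‖ + ‖f y • x‖ := norm_sub_le _ _
      _ = ‖y‖ + |f y| * ‖x‖ := by rw [norm_smul, Real.norm_eq_abs]
      _ ≤ ‖y‖ + ‖y‖ * 1 := by rw [hx]; gcongr; exact hfle y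
      _ = 2 * ‖y‖ := by ring
  -- lower bound
  have hlb : ∀ i : ℕ, 2 - 2 * |x i| ≤ ‖T‖ := by
    intro i
    set c : ℝ := -(Real.sign (x i)) with hc
    set y : lp (fun _ : ℕ => ℝ) 1 := lp.single 1 i c with hy
    have hyj : ∀ j, y j = if j = i then c else 0 := by
      intro j
      by_cases h : j = i
      · subst h; simp [hy, lp.single_apply_self]
      · simp [hy, lp.single_apply_ne (E := fun _ : ℕ => ℝ) 1 i c h, h]
    have hcabs : |c| = 1 := by
      rw [hc, abs_neg]
      rcases (hxi i).lt_or_gt with h | h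
      · rw [Real.sign_of_neg h]; norm_num
      · rw [Real.sign_of_pos h]; norm_num
    have hyn : ‖y‖ = 1 := by
      rw [hnorm]
      rw [tsum_eq_single i (fun j hj => by rw [hyj j, if_neg hj, abs_zero])]
      rw [hyj i, if_pos rfl, hcabs]
    have hfy : f y = -1 := by
      rw [hf]
      rw [tsum_eq_single i (fun j hj => by rw [hyj j, if_neg hj, mul_zero])]
      rw [hyj i, if_pos rfl, hc]
      rcases (hxi i).lt_or_gt with h | h
      · rw [Real.sign_of_neg h]; ring
      · rw [Real.sign_of_pos h]; ring
    have hTy : T y = y + x := by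
      rw [hTapp, hfy]
      simp
    have key : ‖T y‖ = 2 - 2 * |x i| := by
      rw [hTy, hnorm]
      have hco : ∀ j, (y + x) j = y j + x j := fun j => lp.coeFn_add y x ▸ rfl
      have hsYX : Summable fun j => |(y + x) j| := hsumm _
      rw [Summable.tsum_eq_add_tsum_ite hsYX i]
      have h1 : |(y + x) i| = 1 - |x i| := by
        rw [hco i, hyj i, if_pos rfl, hc]
        rcases (hxi i).lt_or_gt with h | h
        · rw [Real.sign_of_neg h, abs_of_nonneg, abs_of_neg h]
          · ring
          · have := hxabs i
            rw [abs_of_neg h] at this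
            linarith
        · rw [Real.sign_of_pos h, abs_of_nonpos, abs_of_pos h]
          · ring
          · have := hxabs i
            rw [abs_of_pos h] at this
            linarith
      have h2 : (∑' j, if j = i then (0:ℝ) else |(y + x) j|)
          = ∑' j, if j = i then (0:ℝ) else |x j| := by
        congr 1
        funext j
        by_cases h : j = i
        · simp [h]
        · rw [if_neg h, if_neg h, hco j, hyj j, if_neg h, zero_add]
      have h3 : (∑' j, if j = i then (0:ℝ) else |x j|) = 1 - |x i| := by
        have := Summable.tsum_eq_add_tsum_ite (hsumm x) i
        rw [hxsum] at this
        linarith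
      rw [h1, h2, h3]
      ring
    have := T.le_opNorm y
    rw [key, hyn, mul_one] at this
    exact this
  have htend : Filter.Tendsto (fun i : ℕ => 2 - 2 * |x i|) Filter.atTop (nhds 2) := by
    have h0 : Filter.Tendsto (fun i : ℕ => |x i|) Filter.atTop (nhds 0) :=
      (hsumm x).tendsto_atTop_zero
    have : Filter.Tendsto (fun i : ℕ => 2 - 2 * |x i|) Filter.atTop (nhds (2 - 2 * 0)) :=
      (tendsto_const_nhds.sub (tendsto_const_nhds.mul h0))
    simpa using this
  exact le_antisymm hub (le_of_tendsto' htend hlb)
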